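/- Let C ⊆ ℝⁿ be a nonempty closed convex set, let f : ℝⁿ → ℝ be differentiable and convex with ∇f L-Lipschitz on C (L > 0), and suppose f attains its minimum over C at x*. Then for every x ∈ C and every η > 0, the gradient mapping satisfies ‖G_η(x)‖² ≤ 2·max{η, L}·(f(x) − f(x*)). -/

import Mathlib

open Set
open scoped RealInnerProductSpace

private lemma aux_descent {n : ℕ}
    (f : EuclideanSpace ℝ (Fin n) → ℝ) (f' : EuclideanSpace ℝ (Fin n) → EuclideanSpace ℝ (Fin n))
    (hgrad : ∀ x, HasGradientAt f (f' x) x) (L : ℝ) (hL : 0 ≤ L)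
    (x y : EuclideanSpace ℝ (Fin n))
    (hlip : ∀ t ∈ Icc (0:ℝ) 1, ‖f' (x + t • (y - x)) - f' x‖ ≤ L * (t * ‖y - x‖)) :
    f y ≤ f x + ⟪f' x, y - x⟫ + L / 2 * ‖y - x‖ ^ 2 := by
  set d := y - x with hd
  have hc : ∀ t : ℝ, HasDerivAt (fun t : ℝ => f (x + t • d)) ⟪f' (x + t • d), d⟫ t := by
    intro t
    have h1 : HasDerivAt (fun t : ℝ => x + t • d) d t := by
      simpa using ((hasDerivAt_id t).smul_const d).const_add x
    have h2 := (hgrad (x + t • d)).hasFDerivAt.comp_hasDerivAt t h1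
    simpa [InnerProductSpace.toDual_apply_apply, Function.comp_def] using h2
  set ψ : ℝ → ℝ := fun t => t * ⟪f' x, d⟫ + L / 2 * t ^ 2 * ‖d‖ ^ 2 - f (x + t • d) with hψdef
  have hψ : ∀ t : ℝ, HasDerivAt ψ (⟪f' x, d⟫ + L * t * ‖d‖ ^ 2 - ⟪f' (x + t • d), d⟫) t := by
    intro t
    have ha : HasDerivAt (fun t : ℝ => t * ⟪f' x, d⟫) ⟪f' x, d⟫ t := by
      simpa using (hasDerivAt_id t).mul_const ⟪f' x, d⟫
    have hb : HasDerivAt (fun t : ℝ => L / 2 * t ^ 2 * ‖d‖ ^ 2) (L * t * ‖d‖ ^ 2) t := by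
      have := ((hasDerivAt_pow 2 t).const_mul (L / 2)).mul_const (‖d‖ ^ 2)
      convert this using 1
      · rfl
      · rfl
      · rw [show (2:ℕ) - 1 = 1 from rfl]
        ring
    exact (ha.add hb).sub (hc t)
  have hdiff : Differentiable ℝ ψ := fun t => (hψ t).differentiableAt
  have hmono : MonotoneOn ψ (Icc 0 1) := by
    apply monotoneOn_of_deriv_nonneg (convex_Icc 0 1) hdiff.continuous.continuousOn
      (fun t _ => (hdiff t).differentiableWithinAt)
    intro t ht
    rw [interior_Icc] at ht
    rw [(hψ t).deriv]
    have h1 := hlip t ⟨ht.1.le, ht.2.le⟩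
    have h2 : ⟪f' (x + t • d) - f' x, d⟫ ≤ ‖f' (x + t • d) - f' x‖ * ‖d‖ :=
      real_inner_le_norm _ _
    rw [inner_sub_left] at h2
    nlinarith [mul_le_mul_of_nonneg_right h1 (norm_nonneg d), norm_nonneg d]
  have h01 := hmono (left_mem_Icc.mpr zero_le_one) (right_mem_Icc.mpr zero_le_one) zero_le_one
  have hψ0 : ψ 0 = -f x := by simp [hψdef]
  have hψ1 : ψ 1 = ⟪f' x, d⟫ + L / 2 * ‖d‖ ^ 2 - f y := by
    have h1' : x + (1:ℝ) • d = y := by rw [one_smul, hd]; abel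
    simp only [hψdef, h1']
    ring
  rw [hψ0, hψ1] at h01
  linarith

set_option maxHeartbeats 800000 in
/-- For `f` convex and differentiable with `L`-Lipschitz gradient on a
nonempty closed convex set `C`, attaining its minimum over `C` at `xs`, the gradient
mapping `G_η(x) = η(x - P_C(x - (1/η)∇f(x)))` satisfies
`‖G_η(x)‖² ≤ 2·max{η, L}·(f x - f xs)` for every `x ∈ C` and `η > 0`. -/
theorem gradient_mapping_sq_le_primal_gap
    {n : ℕ} (C : Set (EuclideanSpace ℝ (Fin n)))
    (hCne : C.Nonempty) (hCclosed : IsClosed C) (hCconvex : Convex ℝ C)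
    (proj : EuclideanSpace ℝ (Fin n) → EuclideanSpace ℝ (Fin n))
    (hproj_mem : ∀ u, proj u ∈ C)
    (hproj_min : ∀ u, ∀ w ∈ C, ‖u - proj u‖ ≤ ‖u - w‖)
    (f : EuclideanSpace ℝ (Fin n) → ℝ) (f' : EuclideanSpace ℝ (Fin n) → EuclideanSpace ℝ (Fin n))
    (hgrad : ∀ x, HasGradientAt f (f' x) x)
    (hconv : ConvexOn ℝ Set.univ f)
    (L : ℝ) (hL : 0 < L)
    (hlip : ∀ x ∈ C, ∀ y ∈ C, ‖f' x - f' y‖ ≤ L * ‖x - y‖)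
    (xs : EuclideanSpace ℝ (Fin n)) (hxsC : xs ∈ C) (hxsmin : ∀ u ∈ C, f xs ≤ f u)
    (x : EuclideanSpace ℝ (Fin n)) (hxC : x ∈ C) (η : ℝ) (hη : 0 < η) :
    ‖η • (x - proj (x - (1 / η) • f' x))‖ ^ 2 ≤ 2 * max η L * (f x - f xs) := by
  -- variational inequality for the projection
  have vi : ∀ u, ∀ w ∈ C, ⟪u - proj u, w - proj u⟫ ≤ 0 := by
    intro u w hw
    set p := proj u with hpu
    by_contra hcon
    push_neg at hcon
    set c := ⟪u - p, w - p⟫ with hcdef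
    have hs0 : 0 < ‖w - p‖ ^ 2 := by
      rcases eq_or_ne w p with rfl | hne
      · simp [hcdef] at hcon
      · exact pow_pos (norm_pos_iff.mpr (sub_ne_zero.mpr hne)) 2
    set s := ‖w - p‖ ^ 2 with hsdef
    set t := min 1 (c / s) with htdef
    have ht0 : 0 < t := lt_min one_pos (div_pos hcon hs0)
    have ht1 : t ≤ 1 := min_le_left _ _
    have hmem : p + t • (w - p) ∈ C :=
      hCconvex.add_smul_sub_mem (hproj_mem u) hw ⟨ht0.le, ht1⟩
    have h := hproj_min u _ hmem
    have hsq : ‖u - p‖ ^ 2 ≤ ‖u - (p + t • (w - p))‖ ^ 2 :=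
      pow_le_pow_left₀ (norm_nonneg _) h 2
    have hvec : u - (p + t • (w - p)) = (u - p) - t • (w - p) := by abel
    have hexp : ‖u - (p + t • (w - p))‖ ^ 2 = ‖u - p‖ ^ 2 - 2 * (t * c) + t ^ 2 * s := by
      rw [hvec, norm_sub_sq_real, real_inner_smul_right, norm_smul, mul_pow, hcdef, hsdef]
      simp [sq_abs]
    rw [hexp] at hsq
    have h2 : 2 * c ≤ t * s := by nlinarith
    have h3 : t * s ≤ c := by
      calc t * s ≤ (c / s) * s := mul_le_mul_of_nonneg_right (min_le_right _ _) hs0.le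
        _ = c := div_mul_cancel₀ c hs0.ne'
    linarith
  set m := max η L with hmdef
  have hm0 : 0 < m := lt_of_lt_of_le hη (le_max_left _ _)
  have hηm : η ≤ m := le_max_left _ _
  have hLm : L ≤ m := le_max_right _ _
  set g := f' x with hg
  set p := proj (x - (1 / η) • g) with hp
  set q := proj (x - (1 / m) • g) with hq
  set A := ‖x - p‖ with hA
  set B := ‖x - q‖ with hB
  have hA0 : 0 ≤ A := norm_nonneg _
  have hB0 : 0 ≤ B := norm_nonneg _
  -- the three variational inequalities we need
  have h1 : ⟪(x - p) - (1 / η) • g, (x - p) - (x - q)⟫ ≤ 0 := by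
    have := vi (x - (1 / η) • g) q (hproj_mem _)
    rw [← hp] at this
    convert this using 2 <;> abel
  have h2 : ⟪(x - q) - (1 / m) • g, (x - q) - (x - p)⟫ ≤ 0 := by
    have := vi (x - (1 / m) • g) p (hproj_mem _)
    rw [← hq] at this
    convert this using 2 <;> abel
  have h3 : ⟪(x - q) - (1 / m) • g, x - q⟫ ≤ 0 := by
    have := vi (x - (1 / m) • g) x hxC
    rw [← hq] at this
    convert this using 2
    abel
  have e1 : ⟪(x - p) - (1 / η) • g, (x - p) - (x - q)⟫
      = A ^ 2 - ⟪x - p, x - q⟫ - (1 / η) * (⟪g, x - p⟫ - ⟪g, x - q⟫) := by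
    rw [hA, ← real_inner_self_eq_norm_sq]
    simp only [inner_sub_left, inner_sub_right, real_inner_smul_left]
    ring
  have e2 : ⟪(x - q) - (1 / m) • g, (x - q) - (x - p)⟫
      = B ^ 2 - ⟪x - q, x - p⟫ - (1 / m) * (⟪g, x - q⟫ - ⟪g, x - p⟫) := by
    rw [hB, ← real_inner_self_eq_norm_sq]
    simp only [inner_sub_left, inner_sub_right, real_inner_smul_left]
    ring
  have e3 : ⟪(x - q) - (1 / m) • g, x - q⟫ = B ^ 2 - (1 / m) * ⟪g, x - q⟫ := by
    rw [hB, ← real_inner_self_eq_norm_sq]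
    simp only [inner_sub_left, inner_sub_right, real_inner_smul_left]
    ring
  rw [e1] at h1
  rw [e2] at h2
  have hcomm : ⟪x - q, x - p⟫ = ⟪x - p, x - q⟫ := real_inner_comm _ _
  rw [hcomm] at h2
  rw [e3] at h3
  have hcs : ⟪x - p, x - q⟫ ≤ A * B := by
    rw [hA, hB]; exact real_inner_le_norm _ _
  -- monotonicity of the gradient mapping norm: η * A ≤ m * B
  have hmonot : η * A ≤ m * B := by
    set α := ⟪x - p, x - q⟫
    set γa := ⟪g, x - p⟫
    set γb := ⟪g, x - q⟫
    -- h1 : A^2 - α - (1/η) * (γa - γb) ≤ 0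
    -- h2 : B^2 - α - (1/m) * (γb - γa) ≤ 0
    have key : (1 / m) * A ^ 2 + (1 / η) * B ^ 2 ≤ (1 / η + 1 / m) * (A * B) := by
      have e1 := mul_le_mul_of_nonneg_left h1 (le_of_lt (one_div_pos.mpr hm0))
      have e2 := mul_le_mul_of_nonneg_left h2 (le_of_lt (one_div_pos.mpr hη))
      nlinarith [mul_le_mul_of_nonneg_left hcs
        (by positivity : (0:ℝ) ≤ 1 / η + 1 / m)]
    have hts : (1 / m : ℝ) ≤ 1 / η := one_div_le_one_div_of_le hη hηm
    have hkey2 : (1 / m) * A ≤ (1 / η) * B := by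
      by_contra hcon
      push_neg at hcon
      have hBA : B < A := by
        have h4 : (1 / m) * B ≤ (1 / η) * B :=
          mul_le_mul_of_nonneg_right hts hB0
        have : (1 / m) * B < (1 / m) * A := lt_of_le_of_lt h4 hcon
        exact lt_of_mul_lt_mul_left this (le_of_lt (one_div_pos.mpr hm0))
      nlinarith
    have := mul_le_mul_of_nonneg_left hkey2 (le_of_lt (mul_pos hη hm0))
    have hη' : η ≠ 0 := ne_of_gt hη
    have hm' : m ≠ 0 := ne_of_gt hm0
    calc η * A = η * m * (1 / m * A) := by field_simp
      _ ≤ η * m * (1 / η * B) := this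
      _ = m * B := by field_simp
  -- descent lemma applied from x to q
  have hqC : q ∈ C := hproj_mem _
  have hdes : f q ≤ f x + ⟪g, q - x⟫ + L / 2 * ‖q - x‖ ^ 2 := by
    apply aux_descent f f' hgrad L hL.le x q
    intro t ht
    have hz : x + t • (q - x) ∈ C := hCconvex.add_smul_sub_mem hxC hqC ht
    have := hlip _ hz x hxC
    calc ‖f' (x + t • (q - x)) - f' x‖ ≤ L * ‖x + t • (q - x) - x‖ := this
      _ = L * (t * ‖q - x‖) := by
          rw [add_sub_cancel_left, norm_smul, Real.norm_of_nonneg ht.1]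
  have hqx : ⟪g, q - x⟫ = -⟪g, x - q⟫ := by rw [← inner_neg_right]; congr 1; abel
  have hnqx : ‖q - x‖ = B := by rw [hB, norm_sub_rev]
  rw [hqx, hnqx] at hdes
  -- h3 gives m * B^2 ≤ ⟪g, x - q⟫
  have h3' : m * B ^ 2 ≤ ⟪g, x - q⟫ := by
    calc m * B ^ 2 ≤ m * (1 / m * ⟪g, x - q⟫) :=
          mul_le_mul_of_nonneg_left (by linarith) hm0.le
      _ = ⟪g, x - q⟫ := by
          rw [← mul_assoc, mul_one_div, div_self hm0.ne', one_mul]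
  have hgap : m / 2 * B ^ 2 ≤ f x - f xs := by
    have hxs : f xs ≤ f q := hxsmin q hqC
    nlinarith [hdes, h3', hxs, sq_nonneg B]
  -- finish
  have hη'' : ‖η • (x - p)‖ = η * A := by
    rw [norm_smul, Real.norm_of_nonneg hη.le, hA]
  rw [hη'']
  have hsq : (η * A) ^ 2 ≤ (m * B) ^ 2 := by
    apply pow_le_pow_left₀ (by positivity) hmonot
  calc (η * A) ^ 2 ≤ (m * B) ^ 2 := hsq
    _ = 2 * m * (m / 2 * B ^ 2) := by ring
    _ ≤ 2 * m * (f x - f xs) := by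
        apply mul_le_mul_of_nonneg_left hgap (by positivity)
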